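/- As Q → ∞, the upper bound R^up_DG(Q) = max over ρ₁₂∈[0,1], ρ₂ₛ∈[−1,0] with ρ₁₂²+ρ₂ₛ²≤1 of min{ ½log₂(1+P₁(1−ρ₁₂²−ρ₂ₛ²)/(N₂(1−ρ₂ₛ²))), ½log₂(1+(√P₁+ρ₁₂√P₂)²/(P₂(1−ρ₁₂²−ρ₂ₛ²)+(√Q+ρ₂ₛ√P₂)²+N₃)) + ½log₂(1+P₂(1−ρ₁₂²−ρ₂ₛ²)/N₃) } converges to min{ ½log₂(1+P₁/N₂), ½log₂(1+P₂/N₃) }. -/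

import Mathlib

open Real Filter

lemma sqrt_tendsto_atTop' : Tendsto Real.sqrt atTop atTop := by
  rw [tendsto_atTop_atTop]
  intro b
  refine ⟨max (b ^ 2) 0, fun a ha => ?_⟩
  calc b ≤ |b| := le_abs_self b
    _ = Real.sqrt (b ^ 2) := (Real.sqrt_sq_eq_abs b).symm
    _ ≤ Real.sqrt a := Real.sqrt_le_sqrt (le_trans (le_max_left _ _) ha)

set_option maxHeartbeats 1000000 in
/-- as `Q → ∞`, the upper bound `R^up_DG(Q)` of Corollary 3 for the
degraded Gaussian relay channel with informed relay converges to
`min{½log₂(1+P₁/N₂), ½log₂(1+P₂/N₃)}`. -/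
theorem stmt13 (P1 P2 N2 N3 : ℝ)
    (hP1 : 0 < P1) (hP2 : 0 < P2) (hN2 : 0 < N2) (hN3 : 0 < N3) :
    Tendsto (fun Q : ℝ =>
      sSup {r : ℝ | ∃ ρ12 ∈ Set.Icc (0:ℝ) 1, ∃ ρ2s ∈ Set.Icc (-1:ℝ) 0,
        ρ12 ^ 2 + ρ2s ^ 2 ≤ 1 ∧
        r = min
          ((1/2) * logb 2 (1 + P1 * (1 - ρ12 ^ 2 - ρ2s ^ 2) / (N2 * (1 - ρ2s ^ 2))))
          ((1/2) * logb 2 (1 + (Real.sqrt P1 + ρ12 * Real.sqrt P2) ^ 2 /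
              (P2 * (1 - ρ12 ^ 2 - ρ2s ^ 2) + (Real.sqrt Q + ρ2s * Real.sqrt P2) ^ 2 + N3)) +
           (1/2) * logb 2 (1 + P2 * (1 - ρ12 ^ 2 - ρ2s ^ 2) / N3))})
      atTop
      (nhds (min ((1/2) * logb 2 (1 + P1 / N2)) ((1/2) * logb 2 (1 + P2 / N3)))) := by
  set A := (1/2) * logb 2 (1 + P1 / N2) with hA
  set B := (1/2) * logb 2 (1 + P2 / N3) with hB
  set L := min A B with hL
  set δ : ℝ → ℝ := fun Q =>
    (1/2) * logb 2 (1 + (Real.sqrt P1 + Real.sqrt P2) ^ 2 /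
      ((Real.sqrt Q - Real.sqrt P2) ^ 2 + N3)) with hδdef
  set S : ℝ → Set ℝ := fun Q => {r : ℝ | ∃ ρ12 ∈ Set.Icc (0:ℝ) 1, ∃ ρ2s ∈ Set.Icc (-1:ℝ) 0,
        ρ12 ^ 2 + ρ2s ^ 2 ≤ 1 ∧
        r = min
          ((1/2) * logb 2 (1 + P1 * (1 - ρ12 ^ 2 - ρ2s ^ 2) / (N2 * (1 - ρ2s ^ 2))))
          ((1/2) * logb 2 (1 + (Real.sqrt P1 + ρ12 * Real.sqrt P2) ^ 2 /
              (P2 * (1 - ρ12 ^ 2 - ρ2s ^ 2) + (Real.sqrt Q + ρ2s * Real.sqrt P2) ^ 2 + N3)) +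
           (1/2) * logb 2 (1 + P2 * (1 - ρ12 ^ 2 - ρ2s ^ 2) / N3))} with hS
  have h12' : (1:ℝ) < 2 := one_lt_two
  -- δ is nonnegative and tends to 0
  have hδnn : ∀ Q, 0 ≤ δ Q := by
    intro Q
    have h1 : (1:ℝ) ≤ 1 + (Real.sqrt P1 + Real.sqrt P2) ^ 2 /
        ((Real.sqrt Q - Real.sqrt P2) ^ 2 + N3) := by
      have : 0 ≤ (Real.sqrt P1 + Real.sqrt P2) ^ 2 /
          ((Real.sqrt Q - Real.sqrt P2) ^ 2 + N3) := by positivity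
      linarith
    have := Real.logb_nonneg h12' h1
    simp only [hδdef]
    linarith
  have hδ0 : Tendsto δ atTop (nhds 0) := by
    have hsq : Tendsto (fun Q : ℝ => (Real.sqrt Q - Real.sqrt P2) ^ 2 + N3) atTop atTop := by
      apply Filter.tendsto_atTop_add_const_right
      have h1 : Tendsto (fun Q : ℝ => Real.sqrt Q - Real.sqrt P2) atTop atTop :=
        Filter.tendsto_atTop_add_const_right _ _ sqrt_tendsto_atTop'
      exact (tendsto_pow_atTop two_ne_zero).comp h1
    have hdiv : Tendsto (fun Q : ℝ => (Real.sqrt P1 + Real.sqrt P2) ^ 2 /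
        ((Real.sqrt Q - Real.sqrt P2) ^ 2 + N3)) atTop (nhds 0) :=
      Tendsto.div_atTop tendsto_const_nhds hsq
    have harg : Tendsto (fun Q : ℝ => 1 + (Real.sqrt P1 + Real.sqrt P2) ^ 2 /
        ((Real.sqrt Q - Real.sqrt P2) ^ 2 + N3)) atTop (nhds 1) := by
      simpa using tendsto_const_nhds.add hdiv
    have hlog : Tendsto (fun Q : ℝ => logb 2 (1 + (Real.sqrt P1 + Real.sqrt P2) ^ 2 /
        ((Real.sqrt Q - Real.sqrt P2) ^ 2 + N3))) atTop (nhds 0) := by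
      have hc : ContinuousAt (fun x : ℝ => logb 2 x) 1 := Real.continuousAt_logb one_ne_zero
      have := hc.tendsto.comp harg
      simpa [Real.logb, Function.comp_def] using this
    simpa [hδdef] using tendsto_const_nhds.mul hlog
  -- upper bound on every element of S Q, for Q ≥ P2
  have hupper : ∀ Q : ℝ, P2 ≤ Q → ∀ r ∈ S Q, r ≤ L + δ Q := by
    intro Q hQP2 r hr
    obtain ⟨ρ12, h12, ρ2s, h2s, hsum, rfl⟩ := hr
    obtain ⟨h12a, h12b⟩ := h12
    obtain ⟨h2sa, h2sb⟩ := h2s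
    have hQ0 : (0:ℝ) ≤ Q := le_trans hP2.le hQP2
    have h12sq : 0 ≤ ρ12 ^ 2 := sq_nonneg _
    have h2ssq : 0 ≤ ρ2s ^ 2 := sq_nonneg _
    have h2ssq1 : ρ2s ^ 2 ≤ 1 := by nlinarith
    -- T1 ≤ A
    have hT1 : (1/2) * logb 2 (1 + P1 * (1 - ρ12 ^ 2 - ρ2s ^ 2) / (N2 * (1 - ρ2s ^ 2))) ≤ A := by
      have hargle : P1 * (1 - ρ12 ^ 2 - ρ2s ^ 2) / (N2 * (1 - ρ2s ^ 2)) ≤ P1 / N2 := by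
        rcases eq_or_lt_of_le h2ssq1 with h | h
        · have hnum : 1 - ρ12 ^ 2 - ρ2s ^ 2 ≤ 0 := by nlinarith
          have hnum' : 0 ≤ 1 - ρ12 ^ 2 - ρ2s ^ 2 := by nlinarith
          have : 1 - ρ12 ^ 2 - ρ2s ^ 2 = 0 := le_antisymm hnum hnum'
          rw [this]
          simp
          positivity
        · have hden : 0 < N2 * (1 - ρ2s ^ 2) := by nlinarith
          rw [div_le_div_iff₀ hden hN2]
          nlinarith [mul_nonneg hP1.le hN2.le, mul_nonneg (mul_nonneg hP1.le hN2.le) h12sq]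
      have hargpos : (0:ℝ) < 1 + P1 * (1 - ρ12 ^ 2 - ρ2s ^ 2) / (N2 * (1 - ρ2s ^ 2)) := by
        have : 0 ≤ P1 * (1 - ρ12 ^ 2 - ρ2s ^ 2) / (N2 * (1 - ρ2s ^ 2)) := by
          apply div_nonneg
          · nlinarith
          · nlinarith
        linarith
      have hle2 : 1 + P1 * (1 - ρ12 ^ 2 - ρ2s ^ 2) / (N2 * (1 - ρ2s ^ 2)) ≤ 1 + P1 / N2 := by
        linarith
      have := Real.logb_le_logb_of_le h12' hargpos hle2
      rw [hA]
      linarith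
    -- T2 ≤ δ Q
    have hT2 : (1/2) * logb 2 (1 + (Real.sqrt P1 + ρ12 * Real.sqrt P2) ^ 2 /
        (P2 * (1 - ρ12 ^ 2 - ρ2s ^ 2) + (Real.sqrt Q + ρ2s * Real.sqrt P2) ^ 2 + N3)) ≤ δ Q := by
      have hsP2 : Real.sqrt P2 ≤ Real.sqrt Q := Real.sqrt_le_sqrt hQP2
      have hsP2nn : 0 ≤ Real.sqrt P2 := Real.sqrt_nonneg _
      have hsP1nn : 0 ≤ Real.sqrt P1 := Real.sqrt_nonneg _
      have hnum : (Real.sqrt P1 + ρ12 * Real.sqrt P2) ^ 2 ≤ (Real.sqrt P1 + Real.sqrt P2) ^ 2 := by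
        have hr : ρ12 * Real.sqrt P2 ≤ Real.sqrt P2 := by nlinarith
        have h0 : (0:ℝ) ≤ Real.sqrt P1 + ρ12 * Real.sqrt P2 := by nlinarith
        nlinarith
      have hdenle : (Real.sqrt Q - Real.sqrt P2) ^ 2 + N3 ≤
          P2 * (1 - ρ12 ^ 2 - ρ2s ^ 2) + (Real.sqrt Q + ρ2s * Real.sqrt P2) ^ 2 + N3 := by
        have h1 : 0 ≤ P2 * (1 - ρ12 ^ 2 - ρ2s ^ 2) := by nlinarith
        have h2 : (Real.sqrt Q - Real.sqrt P2) ^ 2 ≤ (Real.sqrt Q + ρ2s * Real.sqrt P2) ^ 2 := by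
          have hr : -Real.sqrt P2 ≤ ρ2s * Real.sqrt P2 := by nlinarith
          have h0 : (0:ℝ) ≤ Real.sqrt Q - Real.sqrt P2 := by linarith
          nlinarith
        linarith
      have hdenpos : (0:ℝ) < (Real.sqrt Q - Real.sqrt P2) ^ 2 + N3 := by positivity
      have hdenpos2 : (0:ℝ) < P2 * (1 - ρ12 ^ 2 - ρ2s ^ 2) +
          (Real.sqrt Q + ρ2s * Real.sqrt P2) ^ 2 + N3 := lt_of_lt_of_le hdenpos hdenle
      have hdiv : (Real.sqrt P1 + ρ12 * Real.sqrt P2) ^ 2 /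
          (P2 * (1 - ρ12 ^ 2 - ρ2s ^ 2) + (Real.sqrt Q + ρ2s * Real.sqrt P2) ^ 2 + N3) ≤
          (Real.sqrt P1 + Real.sqrt P2) ^ 2 / ((Real.sqrt Q - Real.sqrt P2) ^ 2 + N3) :=
        div_le_div₀ (by positivity) hnum hdenpos hdenle
      have hargpos : (0:ℝ) < 1 + (Real.sqrt P1 + ρ12 * Real.sqrt P2) ^ 2 /
          (P2 * (1 - ρ12 ^ 2 - ρ2s ^ 2) + (Real.sqrt Q + ρ2s * Real.sqrt P2) ^ 2 + N3) := by
        have : 0 ≤ (Real.sqrt P1 + ρ12 * Real.sqrt P2) ^ 2 /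
            (P2 * (1 - ρ12 ^ 2 - ρ2s ^ 2) + (Real.sqrt Q + ρ2s * Real.sqrt P2) ^ 2 + N3) :=
          div_nonneg (sq_nonneg _) hdenpos2.le
        linarith
      have hle2 : 1 + (Real.sqrt P1 + ρ12 * Real.sqrt P2) ^ 2 /
          (P2 * (1 - ρ12 ^ 2 - ρ2s ^ 2) + (Real.sqrt Q + ρ2s * Real.sqrt P2) ^ 2 + N3) ≤
          1 + (Real.sqrt P1 + Real.sqrt P2) ^ 2 / ((Real.sqrt Q - Real.sqrt P2) ^ 2 + N3) := by
        linarith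
      have := Real.logb_le_logb_of_le h12' hargpos hle2
      simp only [hδdef]
      linarith
    -- T3 ≤ B
    have hT3 : (1/2) * logb 2 (1 + P2 * (1 - ρ12 ^ 2 - ρ2s ^ 2) / N3) ≤ B := by
      have hle : P2 * (1 - ρ12 ^ 2 - ρ2s ^ 2) / N3 ≤ P2 / N3 := by
        have hnum : P2 * (1 - ρ12 ^ 2 - ρ2s ^ 2) ≤ P2 := by nlinarith
        gcongr
      have hnn : 0 ≤ P2 * (1 - ρ12 ^ 2 - ρ2s ^ 2) / N3 := by
        apply div_nonneg _ hN3.le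
        nlinarith
      have hle2 : 1 + P2 * (1 - ρ12 ^ 2 - ρ2s ^ 2) / N3 ≤ 1 + P2 / N3 := by linarith
      have := Real.logb_le_logb_of_le h12' (by linarith : (0:ℝ) < 1 + P2 * (1 - ρ12 ^ 2 - ρ2s ^ 2) / N3) hle2
      rw [hB]
      linarith
    -- combine
    rcases le_total A B with hAB | hAB
    · calc min _ _ ≤ _ := min_le_left _ _
        _ ≤ A := hT1
        _ ≤ L + δ Q := by
            rw [hL, min_eq_left hAB]
            linarith [hδnn Q]
    · calc min _ _ ≤ _ := min_le_right _ _
        _ ≤ δ Q + B := by linarith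
        _ ≤ L + δ Q := by
            rw [hL, min_eq_right hAB]
            linarith
  -- lower bound: the point ρ12 = 0, ρ2s = 0 witnesses L ≤ sSup (S Q)
  have hmem : ∀ Q : ℝ, 0 ≤ Q → ∃ r ∈ S Q, L ≤ r := by
    intro Q hQ0
    refine ⟨_, ⟨0, by norm_num, 0, by norm_num, by norm_num, rfl⟩, ?_⟩
    have e1 : P1 * (1 - (0:ℝ) ^ 2 - (0:ℝ) ^ 2) / (N2 * (1 - (0:ℝ) ^ 2)) = P1 / N2 := by
      norm_num
    have e3 : P2 * (1 - (0:ℝ) ^ 2 - (0:ℝ) ^ 2) / N3 = P2 / N3 := by norm_num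
    have hεnn : 0 ≤ (1/2) * logb 2 (1 + (Real.sqrt P1 + (0:ℝ) * Real.sqrt P2) ^ 2 /
        (P2 * (1 - (0:ℝ) ^ 2 - (0:ℝ) ^ 2) + (Real.sqrt Q + (0:ℝ) * Real.sqrt P2) ^ 2 + N3)) := by
      have h1 : (0:ℝ) ≤ (Real.sqrt P1 + (0:ℝ) * Real.sqrt P2) ^ 2 /
          (P2 * (1 - (0:ℝ) ^ 2 - (0:ℝ) ^ 2) + (Real.sqrt Q + (0:ℝ) * Real.sqrt P2) ^ 2 + N3) := by
        apply div_nonneg (sq_nonneg _)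
        nlinarith [sq_nonneg (Real.sqrt Q + (0:ℝ) * Real.sqrt P2)]
      have := Real.logb_nonneg h12' (by linarith : (1:ℝ) ≤ 1 + (Real.sqrt P1 + (0:ℝ) * Real.sqrt P2) ^ 2 /
          (P2 * (1 - (0:ℝ) ^ 2 - (0:ℝ) ^ 2) + (Real.sqrt Q + (0:ℝ) * Real.sqrt P2) ^ 2 + N3))
      linarith
    rw [e1, e3]
    apply le_min
    · exact min_le_left _ _
    · have := min_le_right A B
      rw [← hL] at this
      linarith
  have hbdd : ∀ Q : ℝ, P2 ≤ Q → BddAbove (S Q) :=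
    fun Q hQ => ⟨L + δ Q, fun r hr => hupper Q hQ r hr⟩
  -- squeeze
  apply tendsto_of_tendsto_of_tendsto_of_le_of_le' (g := fun _ : ℝ => L)
      (h := fun Q : ℝ => L + δ Q) tendsto_const_nhds
      (by simpa using tendsto_const_nhds.add hδ0)
  · filter_upwards [eventually_ge_atTop (max P2 0)] with Q hQ
    have hQP2 : P2 ≤ Q := le_trans (le_max_left _ _) hQ
    have hQ0 : (0:ℝ) ≤ Q := le_trans (le_max_right _ _) hQ
    obtain ⟨r, hrS, hLr⟩ := hmem Q hQ0
    exact le_trans hLr (le_csSup (hbdd Q hQP2) hrS)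
  · filter_upwards [eventually_ge_atTop (max P2 0)] with Q hQ
    have hQP2 : P2 ≤ Q := le_trans (le_max_left _ _) hQ
    have hQ0 : (0:ℝ) ≤ Q := le_trans (le_max_right _ _) hQ
    obtain ⟨r, hrS, _⟩ := hmem Q hQ0
    exact csSup_le ⟨r, hrS⟩ (hupper Q hQP2)
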